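/- Suppose the total likelihood L = Σ_z W(z) is strictly positive, and define the posterior probability mass function p z = W(z) / L on paths. Then for every 1 ≤ t ≤ T and all k', k ∈ Fin K, the posterior pairwise marginal (the E-step quantity of the EM algorithm) satisfies Σ_{z : z (t−1) = k', z t = k} p z = α (t−1) k' · φ t k' k · e t k · β t k / L. -/
import Mathlib


open Finset Real

namespace HMM7

variable {K : ℕ}

def pw (w : ℕ → Fin K → Fin K → ℝ) (c n : ℕ) (z : Fin (n + 1) → Fin K) : ℝ :=
  ∏ s : Fin n, w (c + s + 1) (z s.castSucc) (z s.succ)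

noncomputable def Fv (w : ℕ → Fin K → Fin K → ℝ) (v : Fin K → ℝ) (c : ℕ) : ℕ → Fin K → ℝ
  | 0 => v
  | m + 1 => fun k => ∑ k₁ : Fin K, Fv w v c m k₁ * w (c + m + 1) k₁ k

noncomputable def Bv (w : ℕ → Fin K → Fin K → ℝ) : ℕ → ℕ → Fin K → ℝ
  | 0, _, _ => 1
  | m + 1, c, k => ∑ k₂ : Fin K, w (c + 1) k k₂ * Bv w m (c + 1) k₂

lemma cons_mk_zero {n : ℕ} {α : Type*} (a : α) (y : Fin n → α) (h : 0 < n + 1) :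
    (Fin.cons a y : Fin (n + 1) → α) ⟨0, h⟩ = a := rfl

lemma cons_mk_succ {n : ℕ} {α : Type*} (a : α) (y : Fin n → α) (i : ℕ) (h : i + 1 < n + 1) :
    (Fin.cons a y : Fin (n + 1) → α) ⟨i + 1, h⟩ = y ⟨i, Nat.lt_of_succ_lt_succ h⟩ :=
  rfl

lemma sum_pi_succ {n : ℕ} (f : (Fin (n + 1) → Fin K) → ℝ) :
    ∑ z : Fin (n + 1) → Fin K, f z = ∑ a : Fin K, ∑ y : Fin n → Fin K, f (Fin.cons a y) := by
  rw [← (Fin.consEquiv (fun _ => Fin K)).sum_comp f, Fintype.sum_prod_type]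
  rfl

lemma pw_cons (w : ℕ → Fin K → Fin K → ℝ) (c n : ℕ) (a : Fin K) (y : Fin (n + 1) → Fin K) :
    pw w c (n + 1) (Fin.cons a y) = w (c + 1) a (y 0) * pw w (c + 1) n y := by
  rw [pw, Fin.prod_univ_succ, pw]
  refine congrArg₂ (· * ·) (by simp) (Finset.prod_congr rfl fun i _ => ?_)
  rw [← Fin.succ_castSucc, Fin.cons_succ, Fin.cons_succ, Fin.val_succ]
  congr 2
  omega

lemma Bsum (w : ℕ → Fin K → Fin K → ℝ) :
    ∀ (m c : ℕ) (k : Fin K),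
      (∑ y : Fin (m + 1) → Fin K, if y 0 = k then pw w c m y else 0) = Bv w m c k := by
  intro m
  induction m with
  | zero =>
    intro c k
    rw [← (Equiv.funUnique (Fin 1) (Fin K)).symm.sum_comp]
    simp [pw, Bv, Equiv.funUnique]
  | succ m ih =>
    intro c k
    rw [sum_pi_succ]
    have h1 : ∀ a : Fin K, (∑ y : Fin (m + 1) → Fin K,
        if (Fin.cons a y : Fin (m + 2) → Fin K) 0 = k
          then pw w c (m + 1) (Fin.cons a y) else 0)
        = if a = k
          then ∑ y : Fin (m + 1) → Fin K, w (c + 1) a (y 0) * pw w (c + 1) m y else 0 := by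
      intro a
      by_cases ha : a = k <;> simp [ha, pw_cons]
    rw [Finset.sum_congr rfl fun a _ => h1 a, Finset.sum_ite_eq' Finset.univ k]
    simp only [Finset.mem_univ, if_true]
    have h2 : ∀ y : Fin (m + 1) → Fin K, w (c + 1) k (y 0) * pw w (c + 1) m y
        = ∑ k₂ : Fin K, if y 0 = k₂ then w (c + 1) k k₂ * pw w (c + 1) m y else 0 := by
      intro y
      rw [Finset.sum_ite_eq Finset.univ (y 0)
        (fun k₂ => w (c + 1) k k₂ * pw w (c + 1) m y)]
      simp
    rw [Finset.sum_congr rfl fun y _ => h2 y, Finset.sum_comm]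
    show (∑ k₂ : Fin K, ∑ y : Fin (m + 1) → Fin K, _) = Bv w (m + 1) c k
    have h3 : ∀ k₂ : Fin K, (∑ y : Fin (m + 1) → Fin K,
        if y 0 = k₂ then w (c + 1) k k₂ * pw w (c + 1) m y else 0)
        = w (c + 1) k k₂ * Bv w m (c + 1) k₂ := by
      intro k₂
      rw [← ih (c + 1) k₂, Finset.mul_sum]
      exact Finset.sum_congr rfl fun y _ => by by_cases hy : y 0 = k₂ <;> simp [hy]
    rw [Finset.sum_congr rfl fun k₂ _ => h3 k₂]
    rfl

end HMM7

namespace HMM7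
variable {K : ℕ}

lemma Fv_shift (w : ℕ → Fin K → Fin K → ℝ) (v : Fin K → ℝ) (c : ℕ) :
    ∀ (m : ℕ) (k : Fin K),
      Fv w (fun b => ∑ a : Fin K, v a * w (c + 1) a b) (c + 1) m k = Fv w v c (m + 1) k := by
  intro m
  induction m with
  | zero => intro k; simp [Fv]
  | succ m ih =>
    intro k
    show (∑ k₁ : Fin K, Fv w _ (c + 1) m k₁ * w (c + 1 + m + 1) k₁ k) = Fv w v c (m + 2) k
    rw [Finset.sum_congr rfl fun k₁ _ => by rw [ih k₁]]
    show _ = ∑ k₁ : Fin K, Fv w v c (m + 1) k₁ * w (c + (m + 1) + 1) k₁ k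
    exact Finset.sum_congr rfl fun k₁ _ => by
      rw [show c + 1 + m + 1 = c + (m + 1) + 1 from by omega]

lemma glue (w : ℕ → Fin K → Fin K → ℝ) :
    ∀ (u n : ℕ) (h : u + 1 ≤ n) (v : Fin K → ℝ) (c : ℕ) (k' k : Fin K),
      (∑ z : Fin (n + 1) → Fin K,
          if z ⟨u, by omega⟩ = k' ∧ z ⟨u + 1, by omega⟩ = k then v (z 0) * pw w c n z else 0)
      = Fv w v c u k' * w (c + u + 1) k' k * Bv w (n - (u + 1)) (c + u + 1) k := by
  intro u
  induction u with
  | zero =>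
    intro n h v c k' k
    obtain ⟨n', rfl⟩ : ∃ m, n = m + 1 := ⟨n - 1, by omega⟩
    rw [sum_pi_succ]
    have h1 : ∀ a : Fin K, (∑ y : Fin (n' + 1) → Fin K,
        if (Fin.cons a y : Fin (n' + 2) → Fin K) ⟨0, by omega⟩ = k'
            ∧ (Fin.cons a y : Fin (n' + 2) → Fin K) ⟨1, by omega⟩ = k
          then v ((Fin.cons a y : Fin (n' + 2) → Fin K) 0) * pw w c (n' + 1) (Fin.cons a y) else 0)
        = if a = k' then (v k' * w (c + 1) k' k) *
            (∑ y : Fin (n' + 1) → Fin K, if y 0 = k then pw w (c + 1) n' y else 0) else 0 := by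
      intro a
      by_cases ha : a = k'
      · subst ha
        rw [if_pos rfl, Finset.mul_sum]
        refine Finset.sum_congr rfl fun y _ => ?_
        by_cases hy : y 0 = k
        · simp only [cons_mk_zero, cons_mk_succ, pw_cons, Fin.mk_zero, hy, Fin.cons_zero,
            and_self, if_pos rfl, if_true, true_and]
          ring
        · simp [cons_mk_succ, Fin.mk_zero, hy]
      · simp [cons_mk_zero, ha]
    rw [Finset.sum_congr rfl fun a _ => h1 a, Finset.sum_ite_eq' Finset.univ k']
    simp only [Finset.mem_univ, if_true]
    rw [Bsum]
    show v k' * w (c + 1) k' k * Bv w n' (c + 1) k = Fv w v c 0 k' * _ * _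
    norm_num [Fv]
  | succ u ih =>
    intro n h v c k' k
    obtain ⟨n', rfl⟩ : ∃ m, n = m + 1 := ⟨n - 1, by omega⟩
    rw [sum_pi_succ]
    have h1 : ∀ a : Fin K, (∑ y : Fin (n' + 1) → Fin K,
        if (Fin.cons a y : Fin (n' + 2) → Fin K) ⟨u + 1, by omega⟩ = k'
            ∧ (Fin.cons a y : Fin (n' + 2) → Fin K) ⟨u + 1 + 1, by omega⟩ = k
          then v ((Fin.cons a y : Fin (n' + 2) → Fin K) 0) * pw w c (n' + 1) (Fin.cons a y) else 0)
        = ∑ y : Fin (n' + 1) → Fin K,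
            if y ⟨u, by omega⟩ = k' ∧ y ⟨u + 1, by omega⟩ = k
              then (v a * w (c + 1) a (y 0)) * pw w (c + 1) n' y else 0 := by
      intro a
      refine Finset.sum_congr rfl fun y _ => ?_
      rw [cons_mk_succ, cons_mk_succ, pw_cons, Fin.cons_zero]
      by_cases hc : y ⟨u, by omega⟩ = k' ∧ y ⟨u + 1, by omega⟩ = k
      · rw [if_pos hc, if_pos hc]; ring
      · rw [if_neg hc, if_neg hc]
    rw [Finset.sum_congr rfl fun a _ => h1 a, Finset.sum_comm]
    have h2 : ∀ y : Fin (n' + 1) → Fin K, (∑ a : Fin K,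
        if y ⟨u, by omega⟩ = k' ∧ y ⟨u + 1, by omega⟩ = k
          then (v a * w (c + 1) a (y 0)) * pw w (c + 1) n' y else 0)
        = if y ⟨u, by omega⟩ = k' ∧ y ⟨u + 1, by omega⟩ = k
            then (∑ a : Fin K, v a * w (c + 1) a (y 0)) * pw w (c + 1) n' y else 0 := by
      intro y
      by_cases hc : y ⟨u, by omega⟩ = k' ∧ y ⟨u + 1, by omega⟩ = k <;>
        simp [hc, Finset.sum_mul]
    rw [Finset.sum_congr rfl fun y _ => h2 y,
      ih n' (by omega) (fun b => ∑ a : Fin K, v a * w (c + 1) a b) (c + 1) k' k,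
      Fv_shift]
    rw [show c + 1 + u + 1 = c + (u + 1) + 1 from by omega,
      show n' - (u + 1) = n' + 1 - (u + 1 + 1) from by omega]

end HMM7

open HMM7


/-- when the total likelihood `L` is positive, the posterior
pairwise marginal (the E-step quantity of the EM algorithm) satisfies
`Σ_{z : z (t−1) = k', z t = k} p z = α (t−1) k' · φ t k' k · e t k · β t k / L`. -/
theorem stmt_7 (K T : ℕ) (hK : 1 ≤ K) (hT : 1 ≤ T)
    (pi0 : Fin K → ℝ) (φ : ℕ → Fin K → Fin K → ℝ) (e : ℕ → Fin K → ℝ)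
    (hπ : ∀ k, 0 ≤ pi0 k)
    (hφ : ∀ t k' k, 0 ≤ φ t k' k)
    (he : ∀ t k, 0 ≤ e t k)
    (α : ℕ → Fin K → ℝ)
    (hα0 : ∀ k, α 0 k = pi0 k)
    (hαrec : ∀ t, 1 ≤ t → t ≤ T → ∀ k : Fin K,
      α t k = e t k * ∑ k' : Fin K, φ t k' k * α (t - 1) k')
    (β : ℕ → Fin K → ℝ)
    (hβT : ∀ k, β T k = 1)
    (hβrec : ∀ t, t < T → ∀ k : Fin K,
      β t k = ∑ k' : Fin K, φ (t + 1) k k' * e (t + 1) k' * β (t + 1) k')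
    (W : (Fin (T + 1) → Fin K) → ℝ)
    (hW : ∀ z, W z = pi0 (z 0) *
      ∏ s : Fin T, φ (↑s + 1) (z s.castSucc) (z s.succ) * e (↑s + 1) (z s.succ))
    (L : ℝ) (hL : L = ∑ z : Fin (T + 1) → Fin K, W z) (hLpos : 0 < L)
    (p : (Fin (T + 1) → Fin K) → ℝ) (hp : ∀ z, p z = W z / L) :
    ∀ t, ∀ ht1 : 1 ≤ t, ∀ ht : t ≤ T, ∀ k' k : Fin K,
      ∑ z ∈ Finset.univ.filter
          (fun z : Fin (T + 1) → Fin K =>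
            z ⟨t - 1, by omega⟩ = k' ∧ z ⟨t, Nat.lt_succ_of_le ht⟩ = k), p z
        = α (t - 1) k' * φ t k' k * e t k * β t k / L := by
  set wf : ℕ → Fin K → Fin K → ℝ := fun c a b => φ c a b * e c b with hwf
  have hWpw : ∀ z : Fin (T + 1) → Fin K, W z = pi0 (z 0) * pw wf 0 T z := by
    intro z
    rw [hW]
    congr 1
    refine Finset.prod_congr rfl fun s _ => ?_
    simp [pw, hwf, zero_add]
  have hFv : ∀ m, m ≤ T → ∀ k, Fv wf pi0 0 m k = α m k := by
    intro m
    induction m with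
    | zero => intro _ k; simp [Fv, hα0]
    | succ m ih =>
      intro hm k
      have h1 := hαrec (m + 1) (by omega) hm k
      simp only [Nat.add_sub_cancel] at h1
      rw [show Fv wf pi0 0 (m + 1) k
          = ∑ k₁ : Fin K, Fv wf pi0 0 m k₁ * wf (0 + m + 1) k₁ k from rfl, h1,
        Finset.mul_sum]
      refine Finset.sum_congr rfl fun k₁ _ => ?_
      rw [ih (by omega) k₁, hwf]
      simp only [zero_add]
      ring
  have hBv : ∀ m t, t + m = T → ∀ k, Bv wf m t k = β t k := by
    intro m
    induction m with
    | zero =>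
      intro t htm k
      obtain rfl : t = T := by omega
      simp [Bv, hβT]
    | succ m ih =>
      intro t htm k
      rw [hβrec t (by omega) k]
      show (∑ k₂ : Fin K, wf (t + 1) k k₂ * Bv wf m (t + 1) k₂) = _
      refine Finset.sum_congr rfl fun k₂ _ => ?_
      rw [ih (t + 1) (by omega) k₂, hwf]
  intro t ht1 ht k' k
  obtain ⟨u, rfl⟩ : ∃ u, t = u + 1 := ⟨t - 1, by omega⟩
  simp only [Nat.add_sub_cancel]
  have key := glue wf u T (by omega) pi0 0 k' k
  simp only [zero_add] at key
  calc (∑ z ∈ Finset.univ.filter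
          (fun z : Fin (T + 1) → Fin K =>
            z ⟨u, by omega⟩ = k' ∧ z ⟨u + 1, by omega⟩ = k), p z)
      = (∑ z ∈ Finset.univ.filter
          (fun z : Fin (T + 1) → Fin K =>
            z ⟨u, by omega⟩ = k' ∧ z ⟨u + 1, by omega⟩ = k), W z) / L := by
        simp only [hp]
        rw [Finset.sum_div]
    _ = (∑ z : Fin (T + 1) → Fin K,
          if z ⟨u, by omega⟩ = k' ∧ z ⟨u + 1, by omega⟩ = k
            then pi0 (z 0) * pw wf 0 T z else 0) / L := by
        rw [Finset.sum_filter]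
        congr 1
        exact Finset.sum_congr rfl fun z _ => by
          by_cases hc : z ⟨u, by omega⟩ = k' ∧ z ⟨u + 1, by omega⟩ = k <;>
            simp [hc, hWpw]
    _ = (Fv wf pi0 0 u k' * wf (u + 1) k' k * Bv wf (T - (u + 1)) (u + 1) k) / L := by
        rw [key]
    _ = α u k' * φ (u + 1) k' k * e (u + 1) k * β (u + 1) k / L := by
        rw [hFv u (by omega) k', hBv (T - (u + 1)) (u + 1) (by omega) k, hwf]
        ring
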